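/- arXiv:1607.07141 — 2 statements merged into one kernel-verified Lean document; each statement's English description precedes it below -/
import Mathlib

section
/- (L_p transference principle, inequality part of Theorem 1.1/3.1.) Let n ≥ 1 and let F : 𝒦ⁿ → [0,∞) be positively homogeneous, increasing and concave, and let p ∈ (1,∞). Then for all K, L ∈ 𝒦ⁿₒ and all α ∈ (0,1), F((1-α)·_p K +_p α·_p L)^p ≥ (1-α)F(K)^p + αF(L)^p. -/
open scoped Pointwise RealInnerProductSpace

/-- A convex body in `ℝⁿ`: a compact convex set with nonempty interior. -/
def IsConvexBody {n : ℕ} (K : Set (EuclideanSpace ℝ (Fin n))) : Prop :=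
  IsCompact K ∧ Convex ℝ K ∧ (interior K).Nonempty

/-- A convex body containing the origin in its interior. -/
def IsConvexBodyO {n : ℕ} (K : Set (EuclideanSpace ℝ (Fin n))) : Prop :=
  IsCompact K ∧ Convex ℝ K ∧ (0 : EuclideanSpace ℝ (Fin n)) ∈ interior K

/-- The support function of a set: `h_K(u) = sup { ⟪x, u⟫ : x ∈ K }`. -/
noncomputable def supp {n : ℕ} (K : Set (EuclideanSpace ℝ (Fin n)))
    (u : EuclideanSpace ℝ (Fin n)) : ℝ :=
  sSup ((fun x => ⟪x, u⟫) '' K)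

section Aux

variable {n : ℕ}

local notation "E" => EuclideanSpace ℝ (Fin n)

lemma inner_cont (u : E) : Continuous fun x : E => ⟪x, u⟫ :=
  continuous_id.inner continuous_const

lemma le_supp_of_mem {K : Set E} (hK : IsCompact K) {x : E} (hx : x ∈ K) (u : E) :
    ⟪x, u⟫ ≤ supp K u :=
  le_csSup ((hK.image (inner_cont u)).bddAbove) ⟨x, hx, rfl⟩

lemma supp_le {K : Set E} (hne : K.Nonempty) {u : E} {c : ℝ}
    (h : ∀ x ∈ K, ⟪x, u⟫ ≤ c) : supp K u ≤ c :=
  csSup_le (hne.image _) (by rintro _ ⟨x, hx, rfl⟩; exact h x hx)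

lemma subset_of_supp_le {A M : Set E} (hA : IsCompact A)
    (hMconv : Convex ℝ M) (hMcl : IsClosed M) (hMne : M.Nonempty)
    (h : ∀ u : E, ‖u‖ = 1 → supp A u ≤ supp M u) : A ⊆ M := by
  intro x hx
  by_contra hxM
  obtain ⟨f, t, hfM, hft⟩ := geometric_hahn_banach_closed_point hMconv hMcl hxM
  set v : E := (InnerProductSpace.toDual ℝ E).symm f with hv
  have hval : ∀ y : E, ⟪v, y⟫ = f y := fun y => InnerProductSpace.toDual_symm_apply
  have hvne : v ≠ 0 := by
    intro h0
    obtain ⟨a, ha⟩ := hMne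
    have h1 : f a = 0 := by rw [← hval a, h0, inner_zero_left]
    have h2 : f x = 0 := by rw [← hval x, h0, inner_zero_left]
    have := (hfM a ha).trans hft
    rw [h1, h2] at this; exact lt_irrefl 0 this
  have hvnorm : (0:ℝ) < ‖v‖ := norm_pos_iff.mpr hvne
  set u : E := ‖v‖⁻¹ • v with hu
  have hun : ‖u‖ = 1 := by
    rw [hu, norm_smul, norm_inv, norm_norm, inv_mul_cancel₀ hvnorm.ne']
  have hMle : supp M u ≤ ‖v‖⁻¹ * t := by
    refine supp_le hMne fun a ha => ?_
    have hrw : ⟪a, u⟫ = ‖v‖⁻¹ * f a := by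
      rw [hu, real_inner_smul_right, real_inner_comm, hval]
    rw [hrw]
    exact mul_le_mul_of_nonneg_left (hfM a ha).le (inv_nonneg.mpr hvnorm.le)
  have hxu : ‖v‖⁻¹ * t < ⟪x, u⟫ := by
    have hrw : ⟪x, u⟫ = ‖v‖⁻¹ * f x := by
      rw [hu, real_inner_smul_right, real_inner_comm, hval]
    rw [hrw]
    exact mul_lt_mul_of_pos_left hft (inv_pos.mpr hvnorm)
  exact absurd (h u hun)
    (not_le.mpr (lt_of_le_of_lt hMle (hxu.trans_le (le_supp_of_mem hA hx u))))

lemma supp_pos {K : Set E} (hK : IsConvexBodyO K) {u : E} (hu : ‖u‖ = 1) :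
    0 < supp K u := by
  obtain ⟨hKc, -, h0⟩ := hK
  obtain ⟨ε, hε, hball⟩ := Metric.mem_nhds_iff.mp (mem_interior_iff_mem_nhds.mp h0)
  have hmem : (ε/2) • u ∈ K := by
    refine hball ?_
    rw [Metric.mem_ball, dist_zero_right, norm_smul, hu, mul_one]
    rw [Real.norm_eq_abs, abs_of_pos (by linarith)]
    linarith
  have hinner : ⟪(ε/2) • u, u⟫ = ε/2 := by
    rw [real_inner_smul_left, real_inner_self_eq_norm_sq, hu]
    ring
  have := le_supp_of_mem hKc hmem u
  rw [hinner] at this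
  linarith

lemma body_smul {K : Set E} (hK : IsConvexBody K) {c : ℝ} (hc : 0 < c) :
    IsConvexBody (c • K) := by
  obtain ⟨h1, h2, x, hx⟩ := hK
  exact ⟨h1.smul c, h2.smul c,
    ⟨c • x, by rw [interior_smul₀ hc.ne']; exact Set.smul_mem_smul_set hx⟩⟩

lemma body_add {A B : Set E} (hA : IsConvexBody A) (hB : IsConvexBody B) :
    IsConvexBody (A + B) := by
  obtain ⟨hA1, hA2, x, hx⟩ := hA
  obtain ⟨hB1, hB2, y, hy⟩ := hB
  refine ⟨hA1.add hB1, hA2.add hB2, ?_⟩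
  have hopen : IsOpen (interior A + B) := (isOpen_interior).add_right
  have hsub : interior A + B ⊆ A + B := Set.add_subset_add interior_subset subset_rfl
  exact ⟨x + y, (hopen.subset_interior_iff.mpr hsub)
    (Set.add_mem_add hx (interior_subset hy))⟩

lemma two_term_mean {w1 w2 z1 z2 p : ℝ} (hw1 : 0 ≤ w1) (hw2 : 0 ≤ w2)
    (hw : w1 + w2 = 1) (hz1 : 0 ≤ z1) (hz2 : 0 ≤ z2) (hp : 1 ≤ p) :
    w1 * z1 + w2 * z2 ≤ (w1 * z1 ^ p + w2 * z2 ^ p) ^ (1/p) := by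
  have h := Real.arith_mean_le_rpow_mean (Finset.univ : Finset (Fin 2)) ![w1, w2] ![z1, z2]
    (by intro i _; fin_cases i <;> simpa) (by simp [Fin.sum_univ_two, hw])
    (by intro i _; fin_cases i <;> simpa) hp
  simpa [Fin.sum_univ_two] using h

end Aux

/-- `L_p` transference principle, inequality part of Theorem 1.1/3.1.
If `F` is nonnegative, positively homogeneous, increasing and concave on convex bodies,
`1 < p < ∞`, `K, L ∈ 𝒦ⁿₒ`, `α ∈ (0,1)`, and `M` is the convex body
`(1-α)·_p K +_p α·_p L`, i.e. the convex body with origin in its interior whose support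
function satisfies `h_M^p = (1-α) h_K^p + α h_L^p` on the unit sphere, then
`F(M)^p ≥ (1-α) F(K)^p + α F(L)^p`. -/
theorem lp_transference_inequality {n : ℕ} (hn : 1 ≤ n)
    (F : Set (EuclideanSpace ℝ (Fin n)) → ℝ)
    (hF0 : ∀ K, IsConvexBody K → 0 ≤ F K)
    (hFhom : ∀ c : ℝ, 0 < c → ∀ K, IsConvexBody K → F (c • K) = c * F K)
    (hFmono : ∀ K L, IsConvexBody K → IsConvexBody L → K ⊆ L → F K ≤ F L)
    (hFconc : ∀ K L, IsConvexBody K → IsConvexBody L → ∀ α : ℝ, α ∈ Set.Ioo (0:ℝ) 1 →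
      (1 - α) * F K + α * F L ≤ F ((1 - α) • K + α • L))
    (p : ℝ) (hp : 1 < p)
    (K L M : Set (EuclideanSpace ℝ (Fin n)))
    (hK : IsConvexBodyO K) (hL : IsConvexBodyO L) (hM : IsConvexBodyO M)
    (α : ℝ) (hα : α ∈ Set.Ioo (0:ℝ) 1)
    (hMsupp : ∀ u : EuclideanSpace ℝ (Fin n), ‖u‖ = 1 →
      supp M u ^ p = (1 - α) * supp K u ^ p + α * supp L u ^ p) :
    (1 - α) * F K ^ p + α * F L ^ p ≤ F M ^ p := by
  obtain ⟨hα0, hα1⟩ := hα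
  have hp0 : (0:ℝ) < p := lt_trans one_pos hp
  have hKb : IsConvexBody K := ⟨hK.1, hK.2.1, ⟨0, hK.2.2⟩⟩
  have hLb : IsConvexBody L := ⟨hL.1, hL.2.1, ⟨0, hL.2.2⟩⟩
  have hMb : IsConvexBody M := ⟨hM.1, hM.2.1, ⟨0, hM.2.2⟩⟩
  have hMne : M.Nonempty := ⟨0, interior_subset hM.2.2⟩
  have hKne : K.Nonempty := ⟨0, interior_subset hK.2.2⟩
  have hLne : L.Nonempty := ⟨0, interior_subset hL.2.2⟩
  have hFK : 0 ≤ F K := hF0 K hKb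
  have hFL : 0 ≤ F L := hF0 L hLb
  have hFM : 0 ≤ F M := hF0 M hMb
  -- single-body containment
  have contain1 : ∀ (N : Set (EuclideanSpace ℝ (Fin n))), IsCompact N → N.Nonempty →
      ∀ a : ℝ, 0 ≤ a → (∀ u, ‖u‖ = 1 → a * supp N u ≤ supp M u) → a • N ⊆ M := by
    intro N hNc hNne a ha hbd
    refine subset_of_supp_le (hNc.smul a) hM.2.1 hM.1.isClosed hMne fun u hu => ?_
    refine (supp_le (hNne.smul_set) ?_).trans (hbd u hu)
    rintro _ ⟨z, hz, rfl⟩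
    rw [real_inner_smul_left]
    exact mul_le_mul_of_nonneg_left (le_supp_of_mem hNc hz u) ha
  -- two-body containment
  have contain2 : ∀ a b : ℝ, 0 ≤ a → 0 ≤ b →
      (∀ u, ‖u‖ = 1 → a * supp K u + b * supp L u ≤ supp M u) →
      a • K + b • L ⊆ M := by
    intro a b ha hb hbd
    refine subset_of_supp_le ((hK.1.smul a).add (hL.1.smul b)) hM.2.1 hM.1.isClosed hMne
      fun u hu => ?_
    refine (supp_le (hKne.smul_set.add hLne.smul_set) ?_).trans (hbd u hu)
    rintro x hx
    rw [Set.mem_add] at hx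
    obtain ⟨y, ⟨k, hk, rfl⟩, z, ⟨l, hl, rfl⟩, rfl⟩ := hx
    rw [inner_add_left, real_inner_smul_left, real_inner_smul_left]
    exact add_le_add
      (mul_le_mul_of_nonneg_left (le_supp_of_mem hK.1 hk u) ha)
      (mul_le_mul_of_nonneg_left (le_supp_of_mem hL.1 hl u) hb)
  rcases eq_or_lt_of_le hFK with hc | hc
  · -- F K = 0
    rw [← hc, Real.zero_rpow hp0.ne', mul_zero, zero_add]
    set a : ℝ := α ^ (1/p) with ha
    have ha0 : 0 < a := Real.rpow_pos_of_pos hα0 _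
    have hap : a ^ p = α := by
      rw [ha, ← Real.rpow_mul hα0.le, one_div_mul_cancel hp0.ne', Real.rpow_one]
    have hbd : ∀ u : EuclideanSpace ℝ (Fin n), ‖u‖ = 1 → a * supp L u ≤ supp M u := by
      intro u hu
      have hLu := supp_pos hL hu
      have hKu := supp_pos hK hu
      have hMu := supp_pos hM hu
      have hpow : (a * supp L u) ^ p ≤ supp M u ^ p := by
        rw [Real.mul_rpow ha0.le hLu.le, hap, hMsupp u hu]
        nlinarith [Real.rpow_pos_of_pos hKu p]
      exact (Real.rpow_le_rpow_iff (by positivity) hMu.le hp0).mp hpow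
    have hsub : a • L ⊆ M := contain1 L hL.1 hLne a ha0.le hbd
    have hFa : a * F L ≤ F M := by
      have := hFmono (a • L) M (body_smul hLb ha0) hMb hsub
      rwa [hFhom a ha0 L hLb] at this
    calc α * F L ^ p = (a * F L) ^ p := by
          rw [Real.mul_rpow ha0.le hFL, hap]
      _ ≤ F M ^ p := Real.rpow_le_rpow (by positivity) hFa hp0.le
  rcases eq_or_lt_of_le hFL with hd | hd
  · -- F L = 0
    rw [← hd, Real.zero_rpow hp0.ne', mul_zero, add_zero]
    set a : ℝ := (1 - α) ^ (1/p) with ha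
    have h1α : (0:ℝ) < 1 - α := by linarith
    have ha0 : 0 < a := Real.rpow_pos_of_pos h1α _
    have hap : a ^ p = 1 - α := by
      rw [ha, ← Real.rpow_mul h1α.le, one_div_mul_cancel hp0.ne', Real.rpow_one]
    have hbd : ∀ u : EuclideanSpace ℝ (Fin n), ‖u‖ = 1 → a * supp K u ≤ supp M u := by
      intro u hu
      have hLu := supp_pos hL hu
      have hKu := supp_pos hK hu
      have hMu := supp_pos hM hu
      have hpow : (a * supp K u) ^ p ≤ supp M u ^ p := by
        rw [Real.mul_rpow ha0.le hKu.le, hap, hMsupp u hu]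
        nlinarith [Real.rpow_pos_of_pos hLu p]
      exact (Real.rpow_le_rpow_iff (by positivity) hMu.le hp0).mp hpow
    have hsub : a • K ⊆ M := contain1 K hK.1 hKne a ha0.le hbd
    have hFa : a * F K ≤ F M := by
      have := hFmono (a • K) M (body_smul hKb ha0) hMb hsub
      rwa [hFhom a ha0 K hKb] at this
    calc (1 - α) * F K ^ p = (a * F K) ^ p := by
          rw [Real.mul_rpow ha0.le hFK, hap]
      _ ≤ F M ^ p := Real.rpow_le_rpow (by positivity) hFa hp0.le
  -- main case : 0 < F K, 0 < F L
  · set c : ℝ := F K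
    set d : ℝ := F L
    have h1α : (0:ℝ) < 1 - α := by linarith
    have hcp : 0 < c ^ p := Real.rpow_pos_of_pos hc _
    have hdp : 0 < d ^ p := Real.rpow_pos_of_pos hd _
    set D : ℝ := (1 - α) * c ^ p + α * d ^ p with hDdef
    have hD : 0 < D := by positivity
    have hDp : 0 < D ^ (1/p) := Real.rpow_pos_of_pos hD _
    have hDpp : (D ^ (1/p)) ^ p = D := by
      rw [← Real.rpow_mul hD.le, one_div_mul_cancel hp0.ne', Real.rpow_one]
    set β : ℝ := α * d ^ p / D with hβdef
    have hβ0 : 0 < β := by positivity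
    have hβ1 : β < 1 := by
      rw [hβdef, div_lt_one hD]
      nlinarith
    have h1β : 1 - β = (1 - α) * c ^ p / D := by
      rw [hβdef]; field_simp; rw [hDdef]; ring
    set x : ℝ := D ^ (1/p) / c with hxdef
    set y : ℝ := D ^ (1/p) / d with hydef
    have hx0 : 0 < x := by positivity
    have hy0 : 0 < y := by positivity
    have hxp : x ^ p = D / c ^ p := by
      rw [hxdef, Real.div_rpow hDp.le hc.le, hDpp]
    have hyp : y ^ p = D / d ^ p := by
      rw [hydef, Real.div_rpow hDp.le hd.le, hDpp]
    -- pointwise support bound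
    have hbd : ∀ u : EuclideanSpace ℝ (Fin n), ‖u‖ = 1 →
        ((1 - β) * x) * supp K u + (β * y) * supp L u ≤ supp M u := by
      intro u hu
      have hKu := supp_pos hK hu
      have hLu := supp_pos hL hu
      have hMu := supp_pos hM hu
      have hmean := two_term_mean (by linarith : (0:ℝ) ≤ 1 - β) hβ0.le
        (by ring) (by positivity : (0:ℝ) ≤ x * supp K u)
        (by positivity : (0:ℝ) ≤ y * supp L u) hp.le
      have hsum : (1 - β) * (x * supp K u) ^ p + β * (y * supp L u) ^ p
          = supp M u ^ p := by
        rw [Real.mul_rpow hx0.le hKu.le, Real.mul_rpow hy0.le hLu.le, hxp, hyp,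
          h1β, hβdef, hMsupp u hu]
        field_simp
      rw [hsum] at hmean
      have hMrw : (supp M u ^ p) ^ (1/p) = supp M u := by
        rw [← Real.rpow_mul hMu.le, mul_one_div_cancel hp0.ne', Real.rpow_one]
      rw [hMrw] at hmean
      calc ((1 - β) * x) * supp K u + (β * y) * supp L u
          = (1 - β) * (x * supp K u) + β * (y * supp L u) := by ring
        _ ≤ supp M u := hmean
    have hsub : (1 - β) • (x • K) + β • (y • L) ⊆ M := by
      rw [smul_smul, smul_smul]
      exact contain2 _ _ (mul_nonneg (by linarith) hx0.le) (mul_nonneg hβ0.le hy0.le) hbd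
    have hxKb : IsConvexBody (x • K) := body_smul hKb hx0
    have hyLb : IsConvexBody (y • L) := body_smul hLb hy0
    have hbody : IsConvexBody ((1 - β) • (x • K) + β • (y • L)) :=
      body_add (body_smul hxKb (by linarith)) (body_smul hyLb hβ0)
    have hconc := hFconc (x • K) (y • L) hxKb hyLb β ⟨hβ0, hβ1⟩
    have hmono := hFmono _ M hbody hMb hsub
    have hFxK : F (x • K) = x * c := hFhom x hx0 K hKb
    have hFyL : F (y • L) = y * d := hFhom y hy0 L hLb
    have hDle : D ^ (1/p) ≤ F M := by
      have h1 : (1 - β) * (x * c) + β * (y * d) ≤ F M := by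
        rw [← hFxK, ← hFyL]; exact hconc.trans hmono
      have h2 : (1 - β) * (x * c) + β * (y * d) = D ^ (1/p) := by
        rw [h1β, hβdef, hxdef, hydef]
        field_simp
        ring
      linarith
    calc D = (D ^ (1/p)) ^ p := hDpp.symm
      _ ≤ F M ^ p := Real.rpow_le_rpow hDp.le hDle hp0.le
end

section
/- (Hyperplane-projection case of Lemma 2.3.) Let n ≥ 2 and let K, L be convex bodies in ℝⁿ with K ⊊ L. Then the set { u ∈ S^{n-1} : H^{n-1}(K|u^⊥) < H^{n-1}(L|u^⊥) } has positive (n-1)-dimensional Hausdorff measure in the unit sphere S^{n-1}, where K|u^⊥ denotes the image of K under the orthogonal projection of ℝⁿ onto the hyperplane u^⊥ through the origin orthogonal to u, and H^{n-1} denotes (n-1)-dimensional Hausdorff measure. -/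
open scoped Pointwise RealInnerProductSpace

open scoped MeasureTheory

/-- The orthogonal projection `K | u^⊥` of a set `K` onto the hyperplane through the
origin orthogonal to the unit vector `u`. -/
noncomputable def projPerp {n : ℕ} (u : EuclideanSpace ℝ (Fin n))
    (K : Set (EuclideanSpace ℝ (Fin n))) : Set (EuclideanSpace ℝ (Fin n)) :=
  (fun x => x - ⟪x, u⟫ • u) '' K

open scoped Pointwise RealInnerProductSpace MeasureTheory
open Metric Set Module MeasureTheory

variable {n : ℕ}
local notation "E" => EuclideanSpace ℝ (Fin n)

/-- projection onto uᗮ as a continuous linear map -/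
noncomputable def projCLM (u : EuclideanSpace ℝ (Fin n)) :
    EuclideanSpace ℝ (Fin n) →L[ℝ] EuclideanSpace ℝ (Fin n) :=
  ContinuousLinearMap.id ℝ _ - (innerSL ℝ u).smulRight u

lemma projCLM_apply (u x : EuclideanSpace ℝ (Fin n)) :
    projCLM u x = x - ⟪x, u⟫ • u := by
  have h : ⟪u, x⟫ = ⟪x, u⟫ := real_inner_comm x u
  simp only [projCLM, ContinuousLinearMap.sub_apply, ContinuousLinearMap.id_apply,
    ContinuousLinearMap.smulRight_apply, innerSL_apply_apply, h]

lemma projPerp_eq (u : EuclideanSpace ℝ (Fin n)) (K : Set (EuclideanSpace ℝ (Fin n))) :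
    projPerp u K = projCLM u '' K := by
  unfold projPerp
  ext x
  simp [projCLM_apply]

lemma projCLM_mem_perp {u : EuclideanSpace ℝ (Fin n)} (hu : ‖u‖ = 1)
    (x : EuclideanSpace ℝ (Fin n)) : projCLM u x ∈ (ℝ ∙ u)ᗮ := by
  rw [Submodule.mem_orthogonal_singleton_iff_inner_right, projCLM_apply]
  have : ⟪u, u⟫ = (1:ℝ) := by
    rw [real_inner_self_eq_norm_sq, hu]; norm_num
  rw [inner_sub_right, real_inner_smul_right, this, mul_one, real_inner_comm, sub_self]

lemma projCLM_fix {u w : EuclideanSpace ℝ (Fin n)} (hw : w ∈ (ℝ ∙ u)ᗮ) :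
    projCLM u w = w := by
  rw [projCLM_apply]
  have : ⟪w, u⟫ = 0 := by
    have := (Submodule.mem_orthogonal_singleton_iff_inner_right).1 hw
    rwa [real_inner_comm] at this
  simp [this]

lemma projCLM_fiber {u w : EuclideanSpace ℝ (Fin n)} (hu : ‖u‖ = 1)
    (hw : w ∈ (ℝ ∙ u)ᗮ) (c : ℝ) : projCLM u (w + c • u) = w := by
  have hself : ⟪u, u⟫ = (1:ℝ) := by rw [real_inner_self_eq_norm_sq, hu]; norm_num
  rw [map_add, projCLM_fix hw, _root_.map_smul, projCLM_apply]
  simp [hself, hu]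

lemma projCLM_norm_le {u : EuclideanSpace ℝ (Fin n)} (hu : ‖u‖ = 1)
    (z : EuclideanSpace ℝ (Fin n)) : ‖projCLM u z‖ ≤ ‖z‖ := by
  rw [projCLM_apply]
  set c := ⟪z, u⟫ with hc
  have horth : ⟪z - c • u, c • u⟫ = 0 := by
    have hself : ⟪u, u⟫ = (1:ℝ) := by rw [real_inner_self_eq_norm_sq, hu]; norm_num
    simp [inner_sub_left, inner_smul_left, inner_smul_right, hself, hc, hu]
  have hpyth : ‖z‖^2 = ‖z - c • u‖^2 + ‖c • u‖^2 := by
    have := norm_add_sq_real (z - c • u) (c • u)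
    simp only [sub_add_cancel, horth] at this
    linarith
  nlinarith [norm_nonneg (z - c • u), norm_nonneg z, sq_nonneg ‖c • u‖, norm_nonneg (c • u)]

lemma projCLM_lipschitz {u : EuclideanSpace ℝ (Fin n)} (hu : ‖u‖ = 1) :
    LipschitzWith 1 (projCLM u) := by
  apply LipschitzWith.of_dist_le_mul
  intro x y
  simp only [NNReal.coe_one, one_mul, dist_eq_norm, ← map_sub]
  exact projCLM_norm_le hu _

/-- positivity of H^{n-1} of relative balls in an (n-1)-dim subspace -/
lemma aux_ball_pos (hn : 1 ≤ n) (W : Submodule ℝ (EuclideanSpace ℝ (Fin n)))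
    (hW : finrank ℝ W = n - 1) (p : EuclideanSpace ℝ (Fin n)) (hp : p ∈ W)
    {r : ℝ} (hr : 0 < r) :
    0 < μH[(n:ℝ)-1] ((W : Set (EuclideanSpace ℝ (Fin n))) ∩ Metric.ball p r) := by
  have hd : (0:ℝ) ≤ (n:ℝ) - 1 := by
    have : (1:ℝ) ≤ (n:ℝ) := by exact_mod_cast hn
    linarith
  have himg : ((↑) : W → E) '' (Metric.ball (⟨p, hp⟩ : W) r)
      = (W : Set E) ∩ Metric.ball p r := by
    ext x; constructor
    · rintro ⟨y, hy, rfl⟩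
      exact ⟨y.2, by simpa [Metric.mem_ball, Subtype.dist_eq] using hy⟩
    · rintro ⟨hxW, hx⟩
      exact ⟨⟨x, hxW⟩, by simpa [Metric.mem_ball, Subtype.dist_eq] using hx, rfl⟩
  rw [← himg, isometry_subtype_coe.hausdorffMeasure_image (Or.inl hd)]
  have hcast : ((n:ℝ) - 1) = ((finrank ℝ W : ℕ) : ℝ) := by
    rw [hW]; push_cast [Nat.cast_sub hn]; ring
  rw [hcast]
  exact Metric.isOpen_ball.measure_pos _ (Metric.nonempty_ball.2 hr)

lemma aux_compact_finite (hn : 1 ≤ n) (W : Submodule ℝ (EuclideanSpace ℝ (Fin n)))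
    (hW : finrank ℝ W = n - 1) {S : Set (EuclideanSpace ℝ (Fin n))}
    (hSc : IsCompact S) (hSW : S ⊆ W) :
    μH[(n:ℝ)-1] S < ⊤ := by
  have hd : (0:ℝ) ≤ (n:ℝ) - 1 := by
    have : (1:ℝ) ≤ (n:ℝ) := by exact_mod_cast hn
    linarith
  have himg : S = ((↑) : W → E) '' (((↑) : W → E) ⁻¹' S) := by
    rw [Set.image_preimage_eq_inter_range, Subtype.range_coe]
    exact (Set.inter_eq_left.2 hSW).symm
  rw [himg, isometry_subtype_coe.hausdorffMeasure_image (Or.inl hd)]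
  have hcast : ((n:ℝ) - 1) = ((finrank ℝ W : ℕ) : ℝ) := by
    rw [hW]; push_cast [Nat.cast_sub hn]; ring
  rw [hcast]
  have hWclosed : IsClosed (W : Set E) := Submodule.closed_of_finiteDimensional W
  have : IsCompact (((↑) : W → E) ⁻¹' S) := by
    apply hWclosed.isClosedEmbedding_subtypeVal.isCompact_preimage hSc
  exact this.measure_lt_top

lemma measure_proj_lt (hn : 2 ≤ n) {K L : Set (EuclideanSpace ℝ (Fin n))}
    (hK : IsConvexBody K) (hL : IsConvexBody L) (hKL : K ⊆ L)
    {u x₀ : EuclideanSpace ℝ (Fin n)} (hu : ‖u‖ = 1) (hx₀ : x₀ ∈ L)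
    (hout : projCLM u x₀ ∉ projCLM u '' K) :
    μH[(n:ℝ)-1] (projPerp u K) < μH[(n:ℝ)-1] (projPerp u L) := by
  have hrank1 : 1 ≤ n := by omega
  set W := (ℝ ∙ u)ᗮ with hWdef
  have hu0 : u ≠ 0 := by intro h; rw [h, norm_zero] at hu; norm_num at hu
  have hWrank : finrank ℝ W = n - 1 := by
    haveI : Fact (finrank ℝ (EuclideanSpace ℝ (Fin n)) = (n-1) + 1) :=
      ⟨by rw [finrank_euclideanSpace_fin]; omega⟩
    exact Submodule.finrank_orthogonal_span_singleton hu0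
  rw [projPerp_eq, projPerp_eq]
  set D := projCLM u '' K with hD
  set C := projCLM u '' L with hC
  have hDC : D ⊆ C := Set.image_mono hKL
  have hDcomp : IsCompact D := hK.1.image (projCLM u).continuous
  have hDW : D ⊆ (W : Set _) := by rintro _ ⟨y, -, rfl⟩; exact projCLM_mem_perp hu y
  have hCconv : Convex ℝ C := by
    have := hL.2.1.linear_image ((projCLM u).toLinearMap)
    simpa using this
  set p := projCLM u x₀ with hpdef
  have hpC : p ∈ C := ⟨x₀, hx₀, rfl⟩
  have hpW : p ∈ W := projCLM_mem_perp hu x₀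
  obtain ⟨z₀, hz₀⟩ := hL.2.2
  obtain ⟨ρ, hρpos, hballρ⟩ := Metric.isOpen_iff.1 isOpen_interior z₀ hz₀
  have hballL : Metric.ball z₀ ρ ⊆ L := fun y hy => interior_subset (hballρ hy)
  set q := projCLM u z₀ with hqdef
  have hqW : q ∈ W := projCLM_mem_perp hu z₀
  have hqball : ∀ w, w ∈ W → ‖w - q‖ < ρ → w ∈ C := by
    intro w hwW hwq
    refine ⟨w + ⟪z₀, u⟫ • u, hballL ?_, projCLM_fiber hu hwW _⟩
    rw [Metric.mem_ball, dist_eq_norm]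
    have heq : w + ⟪z₀, u⟫ • u - z₀ = w - q := by
      rw [hqdef, projCLM_apply]; module
    rw [heq]; exact hwq
  have hpd : p ∉ D := hout
  obtain ⟨s, hspos, hsball⟩ :=
    Metric.isOpen_iff.1 hDcomp.isClosed.isOpen_compl p hpd
  set t := min (1:ℝ) (s / (2 * (‖q - p‖ + ρ))) with htdef
  have htpos : 0 < t := lt_min one_pos (div_pos hspos (by positivity))
  have ht1 : t ≤ 1 := min_le_left _ _
  have hts : t * (‖q - p‖ + ρ) < s := by
    calc t * (‖q - p‖ + ρ) ≤ (s / (2*(‖q - p‖+ρ))) * (‖q - p‖+ρ) := by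
          apply mul_le_mul_of_nonneg_right (min_le_right _ _) (by positivity)
      _ = s / 2 := by field_simp
      _ < s := by linarith
  set p' := p + t • (q - p) with hp'def
  have hp'W : p' ∈ W := W.add_mem hpW (W.smul_mem _ (W.sub_mem hqW hpW))
  set B := (W : Set (EuclideanSpace ℝ (Fin n))) ∩ Metric.ball p' (t * ρ) with hBdef
  have hB : B ⊆ C \ D := by
    rintro w ⟨hwW, hwB⟩
    rw [Metric.mem_ball, dist_eq_norm] at hwB
    constructor
    · have hyW : q + t⁻¹ • (w - p') ∈ W :=
        W.add_mem hqW (W.smul_mem _ (W.sub_mem hwW hp'W))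
      have hyC : q + t⁻¹ • (w - p') ∈ C := by
        apply hqball _ hyW
        rw [add_sub_cancel_left, norm_smul, norm_inv, Real.norm_eq_abs, abs_of_pos htpos]
        rw [inv_mul_lt_iff₀ htpos]
        exact hwB.trans_le (by rw [mul_comm])
      have hw_eq : (1-t) • p + t • (q + t⁻¹ • (w - p')) = w := by
        have h1 : t • (t⁻¹ • (w - p')) = w - p' := smul_inv_smul₀ htpos.ne' _
        rw [smul_add, h1, hp'def]; module
      have := hCconv (a := 1-t) (b := t) hpC hyC (by linarith) htpos.le (by ring)
      rwa [hw_eq] at this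
    · intro hwD
      have hwp : dist w p < s := by
        rw [dist_eq_norm]
        have h2 : ‖p' - p‖ = t * ‖q - p‖ := by
          rw [hp'def, add_sub_cancel_left, norm_smul, Real.norm_eq_abs, abs_of_pos htpos]
        calc ‖w - p‖ ≤ ‖w - p'‖ + ‖p' - p‖ := by
              simpa using norm_add_le (w - p') (p' - p)
          _ < t * ρ + t * ‖q - p‖ := by linarith
          _ = t * (‖q - p‖ + ρ) := by ring
          _ < s := hts
      exact hsball hwp hwD
  have hBpos : 0 < μH[(n:ℝ)-1] B :=
    aux_ball_pos hrank1 W hWrank p' hp'W (by positivity)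
  have hDfin : μH[(n:ℝ)-1] D < ⊤ := aux_compact_finite hrank1 W hWrank hDcomp hDW
  have hDmeas : MeasurableSet D := hDcomp.isClosed.measurableSet
  have hBmeas : MeasurableSet B :=
    ((Submodule.closed_of_finiteDimensional W).measurableSet).inter measurableSet_ball
  have hdisj : Disjoint D B := by
    rw [Set.disjoint_left]
    intro a haD haB
    exact (hB haB).2 haD
  calc μH[(n:ℝ)-1] D < μH[(n:ℝ)-1] D + μH[(n:ℝ)-1] B :=
        ENNReal.lt_add_right hDfin.ne hBpos.ne'
    _ = μH[(n:ℝ)-1] (D ∪ B) := (measure_union hdisj hBmeas).symm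
    _ ≤ μH[(n:ℝ)-1] C := measure_mono (Set.union_subset hDC (fun a ha => (hB ha).1))


lemma cap_geom {n : ℕ} {u₀ w : EuclideanSpace ℝ (Fin n)} (hu₀ : ‖u₀‖ = 1)
    (hwu₀ : ⟪u₀, w⟫ = 0) {δ : ℝ} (hδpos : 0 < δ) (hδ1 : δ ≤ 1) (hw : ‖w‖ < δ / 2) :
    ‖w + Real.sqrt (1 - ‖w‖^2) • u₀‖ = 1 ∧
      ‖w + Real.sqrt (1 - ‖w‖^2) • u₀ - u₀‖ < δ := by
  set t := Real.sqrt (1 - ‖w‖^2) with htdef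
  have hw1 : ‖w‖ < 1 := by linarith
  have hwnn := norm_nonneg w
  have ht0 : 0 ≤ t := Real.sqrt_nonneg _
  have htsq : t^2 = 1 - ‖w‖^2 := Real.sq_sqrt (by nlinarith)
  have ht1 : t ≤ 1 := by nlinarith
  have horth : ⟪w, t • u₀⟫ = 0 := by
    rw [real_inner_smul_right, real_inner_comm, hwu₀, mul_zero]
  have hnorm_t : ‖t • u₀‖ = t := by
    rw [norm_smul, Real.norm_eq_abs, abs_of_nonneg ht0, hu₀, mul_one]
  have huu_sq : ‖w + t • u₀‖^2 = 1 := by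
    have h1 := norm_add_sq_real w (t • u₀)
    rw [horth, hnorm_t] at h1
    rw [h1]; linarith
  constructor
  · have h1 : ‖w + t • u₀‖ = Real.sqrt (‖w + t • u₀‖^2) :=
      (Real.sqrt_sq (norm_nonneg _)).symm
    rw [h1, huu_sq, Real.sqrt_one]
  · have h1 : w + t • u₀ - u₀ = w + (t - 1) • u₀ := by module
    have horth2 : ⟪w, (t-1) • u₀⟫ = 0 := by
      rw [real_inner_smul_right, real_inner_comm, hwu₀, mul_zero]
    have h2 := norm_add_sq_real w ((t-1) • u₀)
    rw [horth2] at h2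
    have h3 : ‖(t-1) • u₀‖ = 1 - t := by
      rw [norm_smul, Real.norm_eq_abs, hu₀, mul_one, abs_of_nonpos (by linarith)]
      ring
    have h4 : 1 - t ≤ ‖w‖^2 := by nlinarith
    have h5 : ‖w + (t-1) • u₀‖^2 ≤ 2 * ‖w‖^2 := by
      rw [h2, h3]; nlinarith
    rw [h1]
    nlinarith [norm_nonneg (w + (t-1) • u₀)]

set_option maxHeartbeats 1000000 in
/-- Hyperplane-projection case of Lemma 2.3. For `n ≥ 2` and convex
bodies `K ⊊ L` in `ℝⁿ`, the set of unit vectors `u` with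
`H^{n-1}(K|u^⊥) < H^{n-1}(L|u^⊥)` has positive `(n-1)`-dimensional Hausdorff measure
in the unit sphere. -/
theorem proj_strict_on_positive_measure_set {n : ℕ} (hn : 2 ≤ n)
    (K L : Set (EuclideanSpace ℝ (Fin n)))
    (hK : IsConvexBody K) (hL : IsConvexBody L) (hKL : K ⊂ L) :
    0 < μH[(n : ℝ) - 1] {u : EuclideanSpace ℝ (Fin n) |
      u ∈ Metric.sphere (0 : EuclideanSpace ℝ (Fin n)) 1 ∧
        μH[(n : ℝ) - 1] (projPerp u K) < μH[(n : ℝ) - 1] (projPerp u L)} := by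
  classical
  have hrank1 : 1 ≤ n := by omega
  have hd0 : (0:ℝ) ≤ (n:ℝ) - 1 := by
    have : (1:ℝ) ≤ (n:ℝ) := by exact_mod_cast hrank1
    linarith
  obtain ⟨x₀, hx₀L, hx₀K⟩ := Set.exists_of_ssubset hKL
  have hKsub : K ⊆ L := hKL.1
  -- separating functional
  obtain ⟨f, c, hfK, hfx⟩ := geometric_hahn_banach_closed_point hK.2.1 hK.1.isClosed hx₀K
  obtain ⟨v, hv⟩ := (InnerProductSpace.toDual ℝ (EuclideanSpace ℝ (Fin n))).surjective f
  have hfv : ∀ y, f y = ⟪v, y⟫ := fun y => by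
    rw [← hv]; rfl
  have hvK : ∀ y ∈ K, ⟪v, y⟫ < c := fun y hy => (hfv y) ▸ hfK y hy
  have hvx : c < ⟪v, x₀⟫ := (hfv x₀) ▸ hfx
  obtain ⟨z, hz⟩ := hK.2.2
  have hzK : z ∈ K := interior_subset hz
  have hv0 : v ≠ 0 := by
    rintro rfl
    have h1 := hvK z hzK
    simp only [inner_zero_left] at h1 hvx
    linarith
  -- direction orthogonal to v
  have hspan_ne_top : (ℝ ∙ v) ≠ ⊤ := by
    intro h
    have h1 := finrank_span_singleton (K := ℝ) hv0
    rw [h, finrank_top, finrank_euclideanSpace_fin] at h1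
    omega
  have hbot : (ℝ ∙ v)ᗮ ≠ ⊥ := by
    rw [Ne, Submodule.orthogonal_eq_bot_iff]
    exact hspan_ne_top
  obtain ⟨w₀, hw₀mem, hw₀ne⟩ := Submodule.exists_mem_ne_zero_of_ne_bot hbot
  set u₀ := ‖w₀‖⁻¹ • w₀ with hu₀def
  have hu₀norm : ‖u₀‖ = 1 := norm_smul_inv_norm hw₀ne
  have hu₀mem : u₀ ∈ (ℝ ∙ v)ᗮ := Submodule.smul_mem _ _ hw₀mem
  have hvu₀ : ⟪v, u₀⟫ = 0 :=
    Submodule.mem_orthogonal_singleton_iff_inner_right.1 hu₀mem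
  have hu₀0 : u₀ ≠ 0 := by
    intro h; rw [h, norm_zero] at hu₀norm; norm_num at hu₀norm
  -- bound on L
  obtain ⟨C₀, hC₀⟩ := isBounded_iff_forall_norm_le.1 hL.1.isBounded
  set R := max C₀ 0 with hRdef
  have hR0 : 0 ≤ R := le_max_right _ _
  have hRL : ∀ y ∈ L, ‖y‖ ≤ R := fun y hy => (hC₀ y hy).trans (le_max_left _ _)
  set gap := ⟪v, x₀⟫ - c with hgapdef
  have hgap : 0 < gap := by rw [hgapdef]; exact sub_pos.2 hvx
  set δ := min 1 (gap / (2 * (R * ‖v‖ + 1))) with hδdef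
  have hδpos : 0 < δ := lt_min one_pos (div_pos hgap (by positivity))
  have hδ1 : δ ≤ 1 := min_le_left _ _
  have hδgap : R * ‖v‖ * δ < gap / 2 := by
    have h1 : δ ≤ gap / (2 * (R * ‖v‖ + 1)) := min_le_right _ _
    have h2 : R * ‖v‖ * (gap / (2 * (R * ‖v‖ + 1))) < gap / 2 := by
      rw [← mul_div_assoc, div_lt_div_iff₀ (by positivity) (by norm_num)]
      nlinarith [norm_nonneg v, mul_nonneg hR0 (norm_nonneg v)]
    calc R * ‖v‖ * δ ≤ R * ‖v‖ * (gap / (2 * (R * ‖v‖ + 1))) := by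
          apply mul_le_mul_of_nonneg_left h1 (by positivity)
      _ < gap / 2 := h2
  -- Claim A: every unit u near u₀ works
  have claimA : ∀ u : EuclideanSpace ℝ (Fin n), ‖u‖ = 1 → ‖u - u₀‖ < δ →
      projCLM u x₀ ∉ projCLM u '' K := by
    intro u hu hud
    have hvu : |⟪v, u⟫| ≤ ‖v‖ * δ := by
      have h1 : ⟪v, u⟫ = ⟪v, u - u₀⟫ := by rw [inner_sub_right, hvu₀, sub_zero]
      rw [h1]
      calc |⟪v, u - u₀⟫| ≤ ‖v‖ * ‖u - u₀‖ := abs_real_inner_le_norm _ _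
        _ ≤ ‖v‖ * δ := mul_le_mul_of_nonneg_left hud.le (norm_nonneg v)
    have hinner : ∀ y : EuclideanSpace ℝ (Fin n),
        ⟪v, projCLM u y⟫ = ⟪v, y⟫ - ⟪y, u⟫ * ⟪v, u⟫ := by
      intro y
      rw [projCLM_apply, inner_sub_right, real_inner_smul_right]
    rintro ⟨y, hyK, heq⟩
    have hyn : ‖y‖ ≤ R := hRL y (hKsub hyK)
    have hxn : ‖x₀‖ ≤ R := hRL x₀ hx₀L
    have hyu : |⟪y, u⟫| ≤ R := by
      calc |⟪y, u⟫| ≤ ‖y‖ * ‖u‖ := abs_real_inner_le_norm _ _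
        _ ≤ R := by rw [hu, mul_one]; exact hyn
    have hxu : |⟪x₀, u⟫| ≤ R := by
      calc |⟪x₀, u⟫| ≤ ‖x₀‖ * ‖u‖ := abs_real_inner_le_norm _ _
        _ ≤ R := by rw [hu, mul_one]; exact hxn
    have hyP : ⟪v, projCLM u y⟫ < c + gap / 2 := by
      rw [hinner]
      have h2 : |⟪y, u⟫ * ⟪v, u⟫| ≤ R * (‖v‖ * δ) := by
        rw [abs_mul]
        exact mul_le_mul hyu hvu (abs_nonneg _) hR0
      have h3 := hvK y hyK
      have h4 := abs_le.1 h2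
      nlinarith [hδgap]
    have hxP : c + gap / 2 < ⟪v, projCLM u x₀⟫ := by
      rw [hinner]
      have h2 : |⟪x₀, u⟫ * ⟪v, u⟫| ≤ R * (‖v‖ * δ) := by
        rw [abs_mul]
        exact mul_le_mul hxu hvu (abs_nonneg _) hR0
      have h4 := abs_le.1 h2
      have h5 : ⟪v, x₀⟫ = c + gap := by rw [hgapdef]; ring
      nlinarith [hδgap]
    rw [← heq] at hxP
    linarith
  -- the spherical cap
  set Cap := {u : EuclideanSpace ℝ (Fin n) | ‖u‖ = 1 ∧ ‖u - u₀‖ < δ} with hCapdef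
  have hCapsub : Cap ⊆ {u : EuclideanSpace ℝ (Fin n) |
      u ∈ Metric.sphere (0 : EuclideanSpace ℝ (Fin n)) 1 ∧
        μH[(n : ℝ) - 1] (projPerp u K) < μH[(n : ℝ) - 1] (projPerp u L)} := by
    rintro u ⟨hu1, hu2⟩
    refine ⟨by simpa [mem_sphere_zero_iff_norm] using hu1, ?_⟩
    exact measure_proj_lt hn hK hL hKsub hu1 hx₀L (claimA u hu1 hu2)
  -- positivity of the cap measure
  set W₀ := (ℝ ∙ u₀)ᗮ with hW₀def
  have hW₀rank : finrank ℝ W₀ = n - 1 := by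
    haveI : Fact (finrank ℝ (EuclideanSpace ℝ (Fin n)) = (n-1) + 1) :=
      ⟨by rw [finrank_euclideanSpace_fin]; omega⟩
    exact Submodule.finrank_orthogonal_span_singleton hu₀0
  set r := δ / 2 with hrdef
  have hrpos : 0 < r := by positivity
  have hsub : (W₀ : Set (EuclideanSpace ℝ (Fin n))) ∩ Metric.ball 0 r ⊆
      projCLM u₀ '' Cap := by
    rintro w ⟨hwW, hwball⟩
    rw [Metric.mem_ball, dist_zero_right, hrdef] at hwball
    have hwu₀ : ⟪u₀, w⟫ = 0 :=
      Submodule.mem_orthogonal_singleton_iff_inner_right.1 hwW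
    obtain ⟨h1, h2⟩ := cap_geom hu₀norm hwu₀ hδpos hδ1 hwball
    exact ⟨w + Real.sqrt (1 - ‖w‖^2) • u₀, ⟨h1, h2⟩, projCLM_fiber hu₀norm hwW _⟩
  have hcap_pos : 0 < μH[(n:ℝ)-1] Cap := by
    have h1 : 0 < μH[(n:ℝ)-1] ((W₀ : Set (EuclideanSpace ℝ (Fin n))) ∩ Metric.ball 0 r) :=
      aux_ball_pos hrank1 W₀ hW₀rank 0 W₀.zero_mem hrpos
    have h2 : μH[(n:ℝ)-1] ((W₀ : Set (EuclideanSpace ℝ (Fin n))) ∩ Metric.ball 0 r)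
        ≤ μH[(n:ℝ)-1] (projCLM u₀ '' Cap) := measure_mono hsub
    have h3 := (projCLM_lipschitz hu₀norm).hausdorffMeasure_image_le hd0 Cap
    rw [ENNReal.coe_one, ENNReal.one_rpow, one_mul] at h3
    exact lt_of_lt_of_le h1 ((h2.trans h3 : _))
  exact lt_of_lt_of_le hcap_pos (measure_mono hCapsub)
end
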